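/- For the bi-objective problem LOZJ with f1 = LeadingOnes and f2 = ZeroJump_k on bit-strings of length n, where k is an integer with 1 < k < n/2, the Pareto set equals exactly {0^n} ∪ { 1^i 0^{n−i} : i ∈ {k, k+1, …, n} }, i.e. the all-zeros string together with the strings consisting of i leading ones followed by n−i zeros for each i from k to n. -/
import Mathlib


open Finset

/-- Number of one-bits of a bit-string. -/
def onesCount {n : ℕ} (x : Fin n → Bool) : ℕ :=
  (Finset.univ.filter fun i => x i = true).card

/-- Number of zero-bits of a bit-string. -/
def zerosCount {n : ℕ} (x : Fin n → Bool) : ℕ :=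
  (Finset.univ.filter fun i => x i = false).card

/-- Number of leading one-bits. -/
def leadingOnes {n : ℕ} (x : Fin n → Bool) : ℕ :=
  (Finset.univ.filter fun i : Fin n => ∀ j : Fin n, j ≤ i → x j = true).card

/-- Number of trailing zero-bits. -/
def trailingZeroes {n : ℕ} (x : Fin n → Bool) : ℕ :=
  (Finset.univ.filter fun i : Fin n => ∀ j : Fin n, i ≤ j → x j = false).card

/-- `y` dominates `x` for the bi-objective maximisation problem `(f1, f2)`. -/
def dominates {n : ℕ} (f1 f2 : (Fin n → Bool) → ℕ) (y x : Fin n → Bool) : Prop :=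
  f1 x ≤ f1 y ∧ f2 x ≤ f2 y ∧ (f1 x < f1 y ∨ f2 x < f2 y)

/-- `x` is Pareto optimal: no solution dominates it. -/
def paretoOptimal {n : ℕ} (f1 f2 : (Fin n → Bool) → ℕ) (x : Fin n → Bool) : Prop :=
  ∀ y, ¬ dominates f1 f2 y x

/-- `x` is a non-global Pareto local optimum: not Pareto optimal, and not dominated by
any bit-string at Hamming distance exactly 1. -/
def nonGlobalParetoLocalOpt {n : ℕ} (f1 f2 : (Fin n → Bool) → ℕ) (x : Fin n → Bool) : Prop :=
  ¬ paretoOptimal f1 f2 x ∧ ∀ y, hammingDist y x = 1 → ¬ dominates f1 f2 y x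

/-- The ZeroJump function with jump parameter `k`. -/
def zeroJump (n k : ℕ) (x : Fin n → Bool) : ℕ :=
  if zerosCount x ≤ n - k ∨ x = (fun _ => false) then k + zerosCount x else n - zerosCount x

/-- The OneJump function with jump parameter `k`. -/
def oneJump (n k : ℕ) (x : Fin n → Bool) : ℕ :=
  if onesCount x ≤ n - k ∨ x = (fun _ => true) then k + onesCount x else n - onesCount x

/-- Block `j` (0-indexed) of the bit-string `x` (with `b` blocks of length `ℓ`) is all-ones. -/
def blockAllOnes (b ℓ : ℕ) (x : Fin (b * ℓ) → Bool) (j : Fin b) : Prop :=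
  ∀ i : Fin (b * ℓ), (i : ℕ) / ℓ = (j : ℕ) → x i = true

/-- Block `j` (0-indexed) of the bit-string `x` is all-zeros. -/
def blockAllZeros (b ℓ : ℕ) (x : Fin (b * ℓ) → Bool) (j : Fin b) : Prop :=
  ∀ i : Fin (b * ℓ), (i : ℕ) / ℓ = (j : ℕ) → x i = false

instance (b ℓ : ℕ) (x : Fin (b * ℓ) → Bool) (j : Fin b) : Decidable (blockAllOnes b ℓ x j) := by
  unfold blockAllOnes; infer_instance

instance (b ℓ : ℕ) (x : Fin (b * ℓ) → Bool) (j : Fin b) : Decidable (blockAllZeros b ℓ x j) := by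
  unfold blockAllZeros; infer_instance

/-- OneRoyalRoad: `ℓ` times the number of all-ones blocks. -/
def oneRoyalRoad (b ℓ : ℕ) (x : Fin (b * ℓ) → Bool) : ℕ :=
  ℓ * (Finset.univ.filter fun j : Fin b => blockAllOnes b ℓ x j).card

/-- ZeroRoyalRoad: `ℓ` times the number of all-zeros blocks. -/
def zeroRoyalRoad (b ℓ : ℕ) (x : Fin (b * ℓ) → Bool) : ℕ :=
  ℓ * (Finset.univ.filter fun j : Fin b => blockAllZeros b ℓ x j).card

/-- Number of one-bits in block `j` of `x`. -/
def blockOnes (b ℓ : ℕ) (x : Fin (b * ℓ) → Bool) (j : Fin b) : ℕ :=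
  (Finset.univ.filter fun i : Fin (b * ℓ) => (i : ℕ) / ℓ = (j : ℕ) ∧ x i = true).card

/-- Number of zero-bits in block `j` of `x`. -/
def blockZeros (b ℓ : ℕ) (x : Fin (b * ℓ) → Bool) (j : Fin b) : ℕ :=
  (Finset.univ.filter fun i : Fin (b * ℓ) => (i : ℕ) / ℓ = (j : ℕ) ∧ x i = false).card

section LOZJhelpers

variable {n : ℕ}

lemma onesCount_add_zerosCount (x : Fin n → Bool) : onesCount x + zerosCount x = n := by
  classical
  have h := Finset.card_filter_add_card_filter_not
    (s := (Finset.univ : Finset (Fin n))) (p := fun i => x i = true)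
  simpa [onesCount, zerosCount, Bool.not_eq_true] using h

lemma card_filter_val_lt (i : ℕ) (h : i ≤ n) :
    ((Finset.univ : Finset (Fin n)).filter fun j : Fin n => (j : ℕ) < i).card = i := by
  induction i with
  | zero => simp
  | succ m ih =>
    have hm := ih (Nat.le_of_succ_le h)
    have hins : ((Finset.univ : Finset (Fin n)).filter fun j : Fin n => (j : ℕ) < m + 1)
        = insert (⟨m, h⟩ : Fin n)
            ((Finset.univ : Finset (Fin n)).filter fun j : Fin n => (j : ℕ) < m) := by
      ext j
      simp only [Finset.mem_insert, Finset.mem_filter, Finset.mem_univ, true_and, Fin.ext_iff]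
      omega
    rw [hins, Finset.card_insert_of_notMem (by simp), hm]

lemma lt_leadingOnes_iff (x : Fin n → Bool) (i : Fin n) :
    (i : ℕ) < leadingOnes x ↔ ∀ j : Fin n, j ≤ i → x j = true := by
  constructor
  · intro h
    by_contra hP
    have hsub : (Finset.univ.filter fun a : Fin n => ∀ j : Fin n, j ≤ a → x j = true)
        ⊆ Finset.Iio i := by
      intro a ha
      simp only [Finset.mem_filter, Finset.mem_univ, true_and] at ha
      rw [Finset.mem_Iio]
      by_contra hlt
      push_neg at hlt
      exact hP fun j hj => ha j (le_trans hj hlt)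
    have hc := Finset.card_le_card hsub
    rw [Fin.card_Iio] at hc
    unfold leadingOnes at h
    omega
  · intro hP
    have hsub : Finset.Iic i
        ⊆ (Finset.univ.filter fun a : Fin n => ∀ j : Fin n, j ≤ a → x j = true) := by
      intro a ha
      rw [Finset.mem_Iic] at ha
      simp only [Finset.mem_filter, Finset.mem_univ, true_and]
      exact fun j hj => hP j (le_trans hj ha)
    have hc := Finset.card_le_card hsub
    rw [Fin.card_Iic] at hc
    unfold leadingOnes
    omega

lemma leadingOnes_le_onesCount (x : Fin n → Bool) : leadingOnes x ≤ onesCount x := by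
  unfold leadingOnes onesCount
  apply Finset.card_le_card
  intro a ha
  simp only [Finset.mem_filter, Finset.mem_univ, true_and] at *
  exact ha a le_rfl

lemma leadingOnes_le (x : Fin n → Bool) : leadingOnes x ≤ n := by
  unfold leadingOnes
  calc _ ≤ (Finset.univ : Finset (Fin n)).card := Finset.card_filter_le _ _
    _ = n := by simp

lemma onesCount_canon (i : ℕ) (h : i ≤ n) :
    onesCount (fun j : Fin n => decide ((j : ℕ) < i)) = i := by
  unfold onesCount
  have hset : ((Finset.univ : Finset (Fin n)).filter
        fun j : Fin n => decide ((j : ℕ) < i) = true)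
      = ((Finset.univ : Finset (Fin n)).filter fun j : Fin n => (j : ℕ) < i) := by
    ext j; simp
  rw [hset, card_filter_val_lt i h]

lemma zerosCount_canon (i : ℕ) (h : i ≤ n) :
    zerosCount (fun j : Fin n => decide ((j : ℕ) < i)) = n - i := by
  have := onesCount_add_zerosCount (fun j : Fin n => decide ((j : ℕ) < i))
  rw [onesCount_canon i h] at this
  omega

lemma leadingOnes_canon (i : ℕ) (h : i ≤ n) :
    leadingOnes (fun j : Fin n => decide ((j : ℕ) < i)) = i := by
  unfold leadingOnes
  have hset : ((Finset.univ : Finset (Fin n)).filter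
        fun a : Fin n => ∀ j : Fin n, j ≤ a → decide ((j : ℕ) < i) = true)
      = ((Finset.univ : Finset (Fin n)).filter fun j : Fin n => (j : ℕ) < i) := by
    ext j
    simp only [Finset.mem_filter, Finset.mem_univ, true_and, decide_eq_true_eq]
    constructor
    · intro hp
      exact hp j le_rfl
    · intro hj j' hj'
      have : (j' : ℕ) ≤ (j : ℕ) := hj'
      omega
  rw [hset, card_filter_val_lt i h]

lemma zerosCount_false : zerosCount (fun _ => false : Fin n → Bool) = n := by
  simp [zerosCount]

lemma onesCount_false : onesCount (fun _ => false : Fin n → Bool) = 0 := by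
  simp [onesCount]

lemma LOZJ_sum_le (k : ℕ) (hk : 1 ≤ k) (hkn : k ≤ n) (y : Fin n → Bool) :
    leadingOnes y + zeroJump n k y ≤ n + k := by
  have h1 := leadingOnes_le_onesCount y
  have h2 := onesCount_add_zerosCount y
  unfold zeroJump
  split_ifs with h
  · omega
  · push_neg at h
    have h3 := h.1
    omega

lemma zeroJump_le_max (k : ℕ) (y : Fin n → Bool) : zeroJump n k y ≤ k + n := by
  have h2 := onesCount_add_zerosCount y
  unfold zeroJump
  split_ifs <;> omega

lemma eq_false_of_zeroJump_ge (k : ℕ) (hk : 1 ≤ k) (hkn : k ≤ n) (y : Fin n → Bool)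
    (h : k + n ≤ zeroJump n k y) : y = fun _ => false := by
  have h2 := onesCount_add_zerosCount y
  unfold zeroJump at h
  split_ifs at h with hc
  · rcases hc with hc | hc
    · exfalso; omega
    · exact hc
  · exfalso; omega

lemma zeroJump_canon (k i : ℕ) (hk : k ≤ i) (hin : i ≤ n) :
    zeroJump n k (fun j : Fin n => decide ((j : ℕ) < i)) = k + (n - i) := by
  unfold zeroJump
  rw [zerosCount_canon i hin, if_pos (Or.inl (by omega))]

lemma zeroJump_false (k : ℕ) : zeroJump n k (fun _ => false : Fin n → Bool) = k + n := by
  unfold zeroJump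
  rw [zerosCount_false, if_pos (Or.inr rfl)]

lemma canon_or_lt (x : Fin n → Bool) :
    x = (fun j : Fin n => decide ((j : ℕ) < leadingOnes x)) ∨
      leadingOnes x < onesCount x := by
  by_cases hx : x = fun j : Fin n => decide ((j : ℕ) < leadingOnes x)
  · exact Or.inl hx
  · right
    have hex : ∃ j : Fin n, x j ≠ decide ((j : ℕ) < leadingOnes x) := by
      by_contra hc
      push_neg at hc
      exact hx (funext hc)
    obtain ⟨j, hj⟩ := hex
    have hjt : x j = true ∧ ¬ ((j : ℕ) < leadingOnes x) := by
      by_cases hlt : (j : ℕ) < leadingOnes x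
      · exfalso
        have := (lt_leadingOnes_iff x j).mp hlt j le_rfl
        simp [this, hlt] at hj
      · refine ⟨?_, hlt⟩
        cases hxv : x j with
        | false => simp [hxv, hlt] at hj
        | true => rfl
    unfold leadingOnes onesCount
    apply Finset.card_lt_card
    rw [Finset.ssubset_def]
    constructor
    · intro a ha
      simp only [Finset.mem_filter, Finset.mem_univ, true_and] at *
      exact ha a le_rfl
    · intro hsub
      have hjmem : j ∈ Finset.univ.filter fun i => x i = true := by simp [hjt.1]
      have hjm2 := hsub hjmem
      simp only [Finset.mem_filter, Finset.mem_univ, true_and] at hjm2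
      exact hjt.2 ((lt_leadingOnes_iff x j).mpr hjm2)

end LOZJhelpers

/-- For LOZJ (f1 = LeadingOnes, f2 = ZeroJump_k) with 1 < k < n/2, the Pareto set
is exactly {0^n} ∪ { 1^i 0^{n-i} : k ≤ i ≤ n }. -/
theorem LOZJ_pareto_set (n k : ℕ) (hk : 1 < k) (hkn : 2 * k < n) (x : Fin n → Bool) :
    paretoOptimal leadingOnes (zeroJump n k) x ↔
      x = (fun _ => false) ∨
        ∃ i : ℕ, k ≤ i ∧ i ≤ n ∧ x = (fun j : Fin n => decide ((j : ℕ) < i)) := by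
  have hn : 0 < n := by omega
  have hkn' : k ≤ n := by omega
  constructor
  · intro hpo
    rcases canon_or_lt x with hx | hlt
    · obtain ⟨L, hL⟩ : ∃ L, leadingOnes x = L := ⟨_, rfl⟩
      have hLn : L ≤ n := hL ▸ leadingOnes_le x
      rw [hL] at hx
      rcases Nat.lt_or_ge L k with hLk | hLk
      · rcases Nat.eq_zero_or_pos L with hL0 | hL0
        · left
          rw [hx, hL0]
          funext j
          simp
        · exfalso
          subst hx
          apply hpo (fun j : Fin n => decide ((j : ℕ) < k))
          have hf1x : leadingOnes (fun j : Fin n => decide ((j : ℕ) < L)) = L :=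
            leadingOnes_canon L hLn
          have hf1y : leadingOnes (fun j : Fin n => decide ((j : ℕ) < k)) = k :=
            leadingOnes_canon k hkn'
          have hf2y : zeroJump n k (fun j : Fin n => decide ((j : ℕ) < k)) = k + (n - k) :=
            zeroJump_canon k k le_rfl hkn'
          have hf2x : zeroJump n k (fun j : Fin n => decide ((j : ℕ) < L)) = L := by
            unfold zeroJump
            rw [zerosCount_canon L hLn]
            have hcond : ¬ (n - L ≤ n - k ∨
                (fun j : Fin n => decide ((j : ℕ) < L)) = fun _ => false) := by
              push_neg
              constructor
              · omega
              · intro h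
                have h0 := congrFun h ⟨0, hn⟩
                simp only [decide_eq_false_iff_not] at h0
                exact h0 (by simpa using hL0)
            rw [if_neg hcond]
            omega
          exact ⟨by omega, by omega, Or.inl (by omega)⟩
      · right
        exact ⟨L, hLk, hLn, hx⟩
    · exfalso
      have hoz := onesCount_add_zerosCount x
      by_cases hz : zerosCount x ≤ n - k
      · apply hpo (fun j : Fin n => decide ((j : ℕ) < onesCount x))
        have hon : onesCount x ≤ n := by omega
        have hko : k ≤ onesCount x := by omega
        have hf1y : leadingOnes (fun j : Fin n => decide ((j : ℕ) < onesCount x)) = onesCount x :=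
          leadingOnes_canon _ hon
        have hf2y : zeroJump n k (fun j : Fin n => decide ((j : ℕ) < onesCount x))
            = k + (n - onesCount x) := zeroJump_canon k _ hko hon
        have hf2x : zeroJump n k x = k + zerosCount x := by
          unfold zeroJump
          rw [if_pos (Or.inl hz)]
        exact ⟨by omega, by omega, Or.inl (by omega)⟩
      · apply hpo (fun j : Fin n => decide ((j : ℕ) < k))
        have hf1y : leadingOnes (fun j : Fin n => decide ((j : ℕ) < k)) = k :=
          leadingOnes_canon k hkn'
        have hf2y : zeroJump n k (fun j : Fin n => decide ((j : ℕ) < k)) = k + (n - k) :=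
          zeroJump_canon k k le_rfl hkn'
        have hxne : x ≠ fun _ => false := by
          intro h
          rw [h, onesCount_false] at hlt
          omega
        have hf2x : zeroJump n k x = n - zerosCount x := by
          unfold zeroJump
          rw [if_neg (by push_neg; exact ⟨by omega, hxne⟩)]
        exact ⟨by omega, by omega, Or.inl (by omega)⟩
  · rintro (rfl | ⟨i, hki, hin, rfl⟩)
    · intro y hdom
      obtain ⟨h1, h2, h3⟩ := hdom
      rw [zeroJump_false k] at h2 h3
      have hy : y = fun _ => false :=
        eq_false_of_zeroJump_ge k (by omega) hkn' y h2
      rw [hy] at h1 h3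
      rcases h3 with h3 | h3
      · omega
      · rw [zeroJump_false k] at h3
        omega
    · intro y hdom
      obtain ⟨h1, h2, h3⟩ := hdom
      have hsum := LOZJ_sum_le k (by omega) hkn' y
      rw [leadingOnes_canon i hin] at h1 h3
      rw [zeroJump_canon k i hki hin] at h2 h3
      rcases h3 with h3 | h3 <;> omega
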